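/- For every signed graph (G,σ) with no negative loops, χ_b(G,σ) = min over all signatures σ' switching equivalent to σ of χ((G,σ')⁻), where (G,σ')⁻ is the subgraph of G induced by the negative edges of σ'. -/
import Mathlib


/-- A set `S` of vertices of a signed graph (given by its positive and negative adjacency
relations) is balanced if some switching makes all edges inside `S` positive, i.e. there is a
set `X` such that positive edges inside `S` do not cross `X` and negative edges inside `S`
cross `X`. -/
def IsBalancedSet {V : Type*} (pos neg : V → V → Prop) (S : Set V) : Prop :=
  ∃ X : Set V, ∀ u ∈ S, ∀ v ∈ S,
    (pos u v → ((u ∈ X) ↔ (v ∈ X))) ∧ (neg u v → ¬((u ∈ X) ↔ (v ∈ X)))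

/-- The balanced chromatic number: the least `p` such that the vertex set can be partitioned
into `p` balanced sets. -/
noncomputable def balancedChromatic {V : Type*} (pos neg : V → V → Prop) : ℕ :=
  sInf {p : ℕ | ∃ f : V → Fin p, ∀ i : Fin p, IsBalancedSet pos neg (f ⁻¹' {i})}

/-- The (ordinary) chromatic number of a graph given by its adjacency relation: the least `m`
admitting a proper colouring with `m` colours. -/
noncomputable def chromNum {V : Type*} (adj : V → V → Prop) : ℕ :=
  sInf {m : ℕ | ∃ c : V → Fin m, ∀ u v : V, adj u v → c u ≠ c v}

/-- for every signed graph `(G,σ)`,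
`χ_b(G,σ) = min_{σ' ≡ σ} χ((G,σ')⁻)`, the minimum over all signatures switching equivalent to
`σ` of the chromatic number of the subgraph induced by the negative edges of `σ'`. -/
theorem balancedChromatic_eq_min_chrom_negativeSubgraph {V : Type*} [Fintype V]
    (G : SimpleGraph V) (σ : V → V → Bool) (hsym : ∀ u v, σ u v = σ v u) :
    balancedChromatic (fun u v => G.Adj u v ∧ σ u v = true)
        (fun u v => G.Adj u v ∧ σ u v = false) =
    sInf {m : ℕ | ∃ σ' : V → V → Bool,
        (∃ X : Set V, ∀ u v : V, (σ' u v = σ u v) ↔ ((u ∈ X) ↔ (v ∈ X))) ∧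
        ∃ c : V → Fin m, ∀ u v : V, G.Adj u v → σ' u v = false → c u ≠ c v} := by
  classical
  unfold balancedChromatic
  congr 1
  ext n
  simp only [Set.mem_setOf_eq]
  constructor
  · rintro ⟨f, hf⟩
    choose X hX using hf
    set Y : Set V := {v | v ∈ X (f v)} with hY
    refine ⟨fun u v => if (u ∈ Y ↔ v ∈ Y) then σ u v else !(σ u v), ⟨Y, ?_⟩, f, ?_⟩
    · intro u v
      by_cases h : (u ∈ Y ↔ v ∈ Y) <;> simp [h]
    · intro u v hadj hneg heq
      have hu : u ∈ f ⁻¹' {f v} := by simp [heq]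
      have hv : v ∈ f ⁻¹' {f v} := by simp
      have hXi := hX (f v) u hu v hv
      have huY : u ∈ Y ↔ u ∈ X (f v) := by simp [hY, Set.mem_setOf_eq, heq]
      have hvY : v ∈ Y ↔ v ∈ X (f v) := Iff.rfl
      cases hσ : σ u v with
      | true =>
        have hiff : u ∈ X (f v) ↔ v ∈ X (f v) := hXi.1 ⟨hadj, hσ⟩
        have : (u ∈ Y ↔ v ∈ Y) := by rw [huY, hvY]; exact hiff
        have hneg' : (if (u ∈ Y ↔ v ∈ Y) then σ u v else !(σ u v)) = false := hneg
        rw [if_pos this, hσ] at hneg'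
        exact absurd hneg' (by simp)
      | false =>
        have hniff : ¬(u ∈ X (f v) ↔ v ∈ X (f v)) := hXi.2 ⟨hadj, hσ⟩
        have : ¬(u ∈ Y ↔ v ∈ Y) := by rw [huY, hvY]; exact hniff
        have hneg' : (if (u ∈ Y ↔ v ∈ Y) then σ u v else !(σ u v)) = false := hneg
        rw [if_neg this, hσ] at hneg'
        simp at hneg'
  · rintro ⟨σ', ⟨X, hX⟩, c, hc⟩
    refine ⟨c, fun i => ⟨X, ?_⟩⟩
    intro u hu v hv
    have hci : c u = c v := by
      simp only [Set.mem_preimage, Set.mem_singleton_iff] at hu hv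
      rw [hu, hv]
    have hσ' : ∀ h : G.Adj u v, σ' u v = true := by
      intro h
      by_contra hne
      exact hc u v h (by simpa using hne) hci
    constructor
    · rintro ⟨hadj, ht⟩
      have := hσ' hadj
      rw [← (hX u v), this, ht]
    · rintro ⟨hadj, hft⟩ hiff
      have h1 : σ' u v = σ u v := (hX u v).mpr hiff
      rw [hσ' hadj, hft] at h1
      exact absurd h1 (by simp)
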